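/- Let $m, v, \zeta > 0$ be fixed, let $\tilde\omega > 0$, and define for each admissible $\sigma > 0$ (with $\tilde\omega^{-1} < \sigma m v$) the quantity $z_{\tilde\omega,\sigma}(\zeta)$ as the unique $z > \zeta$ solving $(z-\zeta)\sigma m v (\sigma^4 m^2 v^2 + z^2)^{-1/2} = \tilde\omega^{-1}$. Then for any admissible $\sigma_2 \le \sigma \le \sigma_1$ one has $z_{\tilde\omega, \sigma}(\zeta) \le \max\bigl(z_{\tilde\omega,\sigma_1}(\zeta),\, z_{\tilde\omega,\sigma_2}(\zeta)\bigr)$. -/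
import Mathlib

open Real

private lemma sq_eq_of_root (m v ζ ω σ z : ℝ) (hζ : 0 < ζ) (hz : ζ < z)
    (heq : (z - ζ) * (σ * m * v) / Real.sqrt (σ ^ 4 * m ^ 2 * v ^ 2 + z ^ 2) = ω⁻¹) :
    (z - ζ)^2 * (σ^2 * (m^2 * v^2)) = (ω⁻¹)^2 * (σ^4 * (m^2*v^2) + z^2) := by
  have harg : 0 < σ ^ 4 * m ^ 2 * v ^ 2 + z ^ 2 := by nlinarith [sq_nonneg (σ^2*m*v)]
  have hR : 0 < Real.sqrt (σ ^ 4 * m ^ 2 * v ^ 2 + z ^ 2) := Real.sqrt_pos.mpr harg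
  have h2 : (z - ζ) * (σ * m * v) = ω⁻¹ * Real.sqrt (σ ^ 4 * m ^ 2 * v ^ 2 + z ^ 2) :=
    (div_eq_iff hR.ne').mp heq
  have h3 : ((z - ζ) * (σ * m * v))^2
      = (ω⁻¹)^2 * (Real.sqrt (σ ^ 4 * m ^ 2 * v ^ 2 + z ^ 2))^2 := by
    rw [h2]; ring
  rw [Real.sq_sqrt harg.le] at h3
  linear_combination h3

private lemma mono_aux (B ζ z1 zs : ℝ) (hB : 0 < B) (hζ : 0 < ζ)
    (h1 : ζ < z1) (h2 : z1 < zs) :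
    (z1 - ζ)^2 * (B + zs^2) < (zs - ζ)^2 * (B + z1^2) := by
  nlinarith [mul_pos (mul_pos hζ (sub_pos.mpr h2))
      (show 0 < (zs - ζ)*z1 + (z1-ζ)*zs by nlinarith),
    mul_pos hB (show 0 < (zs - z1)*((zs-ζ)+(z1-ζ)) by nlinarith)]

private lemma A_step (a w ζ σi zi zs : ℝ) (haP : 0 < a) (hσi : 0 < σi)
    (hζ : 0 < ζ) (hzi : ζ < zi) (hlti : zi < zs)
    (Ei : (zi - ζ)^2 * (σi^2 * a) = w * (σi^4 * a + zi^2)) :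
    w * (σi^4 * a + zs^2) < (zs - ζ)^2 * (σi^2 * a) := by
  have hD : 0 < σi^4 * a + zi^2 := by positivity
  have hc : 0 < σi^2 * a := by positivity
  have M := mono_aux (σi^4 * a) ζ zi zs (by positivity) hζ hzi hlti
  have s := mul_lt_mul_of_pos_left M hc
  have e : w * (σi^4*a + zs^2) * (σi^4*a + zi^2)
      < (zs - ζ)^2 * (σi^2*a) * (σi^4*a + zi^2) := by
    calc w * (σi^4*a + zs^2) * (σi^4*a + zi^2)
        = (σi^2*a) * ((zi - ζ)^2 * (σi^4*a + zs^2)) := by linear_combination -(σi^4*a + zs^2) * Ei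
      _ < (σi^2*a) * ((zs - ζ)^2 * (σi^4*a + zi^2)) := s
      _ = (zs - ζ)^2 * (σi^2*a) * (σi^4*a + zi^2) := by ring
  exact lt_of_mul_lt_mul_right e hD.le

set_option maxHeartbeats 1600000 in
theorem z_omega_sigma_max_at_endpoints (m v ζ ω σ σ1 σ2 zs z1 z2 : ℝ)
    (hm : 0 < m) (hv : 0 < v) (hζ : 0 < ζ) (hω : 0 < ω)
    (hσ : 0 < σ) (hσ1 : 0 < σ1) (hσ2 : 0 < σ2)
    (hadm : ω⁻¹ < σ * m * v) (hadm1 : ω⁻¹ < σ1 * m * v) (hadm2 : ω⁻¹ < σ2 * m * v)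
    (hord : σ2 ≤ σ ∧ σ ≤ σ1)
    (hzs : ζ < zs)
    (heqs : (zs - ζ) * (σ * m * v) / Real.sqrt (σ ^ 4 * m ^ 2 * v ^ 2 + zs ^ 2) = ω⁻¹)
    (hz1 : ζ < z1)
    (heq1 : (z1 - ζ) * (σ1 * m * v) / Real.sqrt (σ1 ^ 4 * m ^ 2 * v ^ 2 + z1 ^ 2) = ω⁻¹)
    (hz2 : ζ < z2)
    (heq2 : (z2 - ζ) * (σ2 * m * v) / Real.sqrt (σ2 ^ 4 * m ^ 2 * v ^ 2 + z2 ^ 2) = ω⁻¹) :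
    zs ≤ max z1 z2 := by
  by_contra hcon
  push_neg at hcon
  have hlt1 : z1 < zs := lt_of_le_of_lt (le_max_left z1 z2) hcon
  have hlt2 : z2 < zs := lt_of_le_of_lt (le_max_right z1 z2) hcon
  set a : ℝ := m^2 * v^2 with ha
  have haP : 0 < a := by positivity
  set w : ℝ := (ω⁻¹)^2 with hw
  have hwP : 0 < w := by positivity
  have E : (zs - ζ)^2 * (σ^2 * a) = w * (σ^4 * a + zs^2) :=
    sq_eq_of_root m v ζ ω σ zs hζ hzs heqs
  have E1 : (z1 - ζ)^2 * (σ1^2 * a) = w * (σ1^4 * a + z1^2) :=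
    sq_eq_of_root m v ζ ω σ1 z1 hζ hz1 heq1
  have E2 : (z2 - ζ)^2 * (σ2^2 * a) = w * (σ2^4 * a + z2^2) :=
    sq_eq_of_root m v ζ ω σ2 z2 hζ hz2 heq2
  have A1 : w * (σ1^4 * a + zs^2) < (zs - ζ)^2 * (σ1^2 * a) :=
    A_step a w ζ σ1 z1 zs haP hσ1 hζ hz1 hlt1 E1
  have A2 : w * (σ2^4 * a + zs^2) < (zs - ζ)^2 * (σ2^2 * a) :=
    A_step a w ζ σ2 z2 zs haP hσ2 hζ hz2 hlt2 E2
  have hσsq : (0:ℝ) < σ^2 := by positivity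
  have t1 : w * (σ^2 * (σ1^4*a + zs^2)) < w * (σ1^2 * (σ^4*a + zs^2)) := by
    calc w * (σ^2 * (σ1^4*a + zs^2)) = σ^2 * (w * (σ1^4*a + zs^2)) := by ring
      _ < σ^2 * ((zs - ζ)^2 * (σ1^2*a)) := mul_lt_mul_of_pos_left A1 hσsq
      _ = σ1^2 * ((zs - ζ)^2 * (σ^2*a)) := by ring
      _ = w * (σ1^2 * (σ^4*a + zs^2)) := by rw [E]; ring
  have t2 : w * (σ^2 * (σ2^4*a + zs^2)) < w * (σ2^2 * (σ^4*a + zs^2)) := by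
    calc w * (σ^2 * (σ2^4*a + zs^2)) = σ^2 * (w * (σ2^4*a + zs^2)) := by ring
      _ < σ^2 * ((zs - ζ)^2 * (σ2^2*a)) := mul_lt_mul_of_pos_left A2 hσsq
      _ = σ2^2 * ((zs - ζ)^2 * (σ^2*a)) := by ring
      _ = w * (σ2^2 * (σ^4*a + zs^2)) := by rw [E]; ring
  have u1 : σ^2 * (σ1^4*a + zs^2) < σ1^2 * (σ^4*a + zs^2) :=
    lt_of_mul_lt_mul_left t1 hwP.le
  have u2 : σ^2 * (σ2^4*a + zs^2) < σ2^2 * (σ^4*a + zs^2) :=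
    lt_of_mul_lt_mul_left t2 hwP.le
  have Q1 : (σ1^2 - σ^2) * (zs^2 - a*σ^2*σ1^2) > 0 := by linarith [u1]
  have Q2 : (σ2^2 - σ^2) * (zs^2 - a*σ^2*σ2^2) > 0 := by linarith [u2]
  have hx1 : 0 ≤ σ1^2 - σ^2 := by nlinarith [hord.2, hσ]
  have hx2 : σ2^2 - σ^2 ≤ 0 := by nlinarith [hord.1, hσ2]
  have hy1 : a*σ^2*σ1^2 < zs^2 := by
    by_contra h
    push_neg at h
    linarith [mul_nonneg hx1 (sub_nonneg.mpr h), Q1]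
  have hy2 : zs^2 < a*σ^2*σ2^2 := by
    by_contra h
    push_neg at h
    linarith [mul_nonneg (neg_nonneg.mpr hx2) (sub_nonneg.mpr h), Q2]
  have h12 : σ2^2 ≤ σ1^2 := by nlinarith [hord.1, hord.2, hσ2]
  have hm12 : a*σ^2*σ2^2 ≤ a*σ^2*σ1^2 :=
    mul_le_mul_of_nonneg_left h12 (by positivity)
  linarith [hy1, hy2, hm12]
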